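/- Let B : [0,1] → ℝ be continuous with B(0) = 0, and let u be a B-solution. Then for every h ∈ H1: ∫_0^1 u'(x)h'(x) dx − ∫_0^1 (u'(x)h(x) + u(x)h'(x))·B(x) dx = 0; that is, E(u,h) = 0 for all h ∈ H1, so u solves the homogeneous equation Lu = 0 in the weak sense. -/

import Mathlib

open MeasureTheory intervalIntegral

/-- `u` is a pathwise (`B`-)solution of the homogeneous equation `-u'' + B'·u = 0`. -/
def IsBSolution (B u u' : ℝ → ℝ) : Prop :=
  (∀ x ∈ Set.Icc (0:ℝ) 1, HasDerivWithinAt u (u' x) (Set.Icc 0 1) x) ∧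
  ContinuousOn u' (Set.Icc 0 1) ∧
  ∀ x ∈ Set.Icc (0:ℝ) 1, u' x = u' 0 + u x * B x - ∫ y in (0:ℝ)..x, u' y * B y

/-- `h` belongs to `H1` with (a.e.) derivative `g`: `h` is absolutely continuous on
`[0,1]` with `h(0) = h(1) = 0`, i.e. `h(x) = ∫_0^x g` for an integrable `g` with
`∫_0^1 g = 0`. -/
def MemH1 (h g : ℝ → ℝ) : Prop :=
  MeasureTheory.IntegrableOn g (Set.Icc 0 1) ∧
  (∫ t in (0:ℝ)..1, g t) = 0 ∧
  ∀ x ∈ Set.Icc (0:ℝ) 1, h x = ∫ t in (0:ℝ)..x, g t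

/-- The pathwise bilinear form `E(f,h)`, the weak meaning of `⟨Lf, h⟩` for
`L = -d²/dx² + B'`; here `f'` and `h'` are the derivatives of `f` and `h`. -/
noncomputable def Eform (B f f' h h' : ℝ → ℝ) : ℝ :=
  (∫ x in (0:ℝ)..1, f' x * h' x) -
    ∫ x in (0:ℝ)..1, (f' x * h x + f x * h' x) * B x

/-- The Green operator `T` built from the independent solutions `u`, `v` and the
Wronskian `α`: `(Tf)(x) = α⁻¹·(v(x)·∫_0^x u f + u(x)·∫_x^1 v f)`. -/
noncomputable def greenOp (α : ℝ) (u v f : ℝ → ℝ) (x : ℝ) : ℝ :=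
  α⁻¹ * (v x * (∫ y in (0:ℝ)..x, u y * f y) + u x * (∫ y in x..(1:ℝ), v y * f y))

/-- The derivative of `Tf`:
`(Tf)'(x) = α⁻¹·(v'(x)·∫_0^x u f + u'(x)·∫_x^1 v f)`. -/
noncomputable def greenOpDeriv (α : ℝ) (u u' v v' f : ℝ → ℝ) (x : ℝ) : ℝ :=
  α⁻¹ * (v' x * (∫ y in (0:ℝ)..x, u y * f y) + u' x * (∫ y in x..(1:ℝ), v y * f y))

open Set in
/-- Integration by parts for two indefinite integrals, via Fubini on the triangle. -/
lemma fubini_parts (g w : ℝ → ℝ)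
    (hg : MeasureTheory.IntegrableOn g (Set.Icc 0 1))
    (hw : MeasureTheory.IntegrableOn w (Set.Icc 0 1))
    (hg1 : (∫ t in (0:ℝ)..1, g t) = 0) :
    (∫ x in (0:ℝ)..1, g x * (∫ y in (0:ℝ)..x, w y))
      = - ∫ x in (0:ℝ)..1, (∫ t in (0:ℝ)..x, g t) * w x := by
  set ν : Measure ℝ := volume.restrict (Ioc (0:ℝ) 1) with hν
  have hg' : Integrable g ν := hg.mono_set Ioc_subset_Icc_self
  have hw' : Integrable w ν := hw.mono_set Ioc_subset_Icc_self
  have hgI : IntervalIntegrable g volume 0 1 := by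
    rw [intervalIntegrable_iff_integrableOn_Ioc_of_le zero_le_one]; exact hg'
  set F : ℝ × ℝ → ℝ := Set.indicator {q : ℝ × ℝ | q.2 ≤ q.1} (fun q => g q.1 * w q.2) with hF
  have hFint : Integrable F (ν.prod ν) :=
    (hg'.mul_prod hw').indicator (measurableSet_le measurable_snd measurable_fst)
  have swap : (∫ x, ∫ y, F (x, y) ∂ν ∂ν) = ∫ y, ∫ x, F (x, y) ∂ν ∂ν :=
    MeasureTheory.integral_integral_swap hFint
  -- left side
  have L : ∀ x ∈ Ioc (0:ℝ) 1, (∫ y, F (x, y) ∂ν) = g x * ∫ y in (0:ℝ)..x, w y := by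
    intro x hx
    have e1 : (fun y => F (x, y)) = Set.indicator (Iic x) (fun y => g x * w y) := by
      funext y
      by_cases hxy : y ≤ x <;> simp [hF, Set.indicator, hxy]
    rw [e1, MeasureTheory.integral_indicator measurableSet_Iic, hν,
      Measure.restrict_restrict measurableSet_Iic]
    have e2 : Iic x ∩ Ioc 0 1 = Ioc 0 x := by
      rw [Set.inter_comm, Set.Ioc_inter_Iic, min_eq_right hx.2]
    rw [e2, MeasureTheory.integral_const_mul, intervalIntegral.integral_of_le hx.1.le]
  have R : ∀ y ∈ Ioc (0:ℝ) 1, (∫ x, F (x, y) ∂ν) = -((∫ t in (0:ℝ)..y, g t) * w y) := by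
    intro y hy
    have e1 : (fun x => F (x, y)) = Set.indicator (Ici y) (fun x => g x * w y) := by
      funext x
      by_cases hxy : y ≤ x <;> simp [hF, Set.indicator, hxy]
    rw [e1, MeasureTheory.integral_indicator measurableSet_Ici, hν,
      Measure.restrict_restrict measurableSet_Ici]
    have e2 : Ici y ∩ Ioc 0 1 = Icc y 1 := by
      ext x
      simp only [mem_inter_iff, mem_Ici, mem_Ioc, mem_Icc]
      exact ⟨fun ⟨h1, _, h3⟩ => ⟨h1, h3⟩, fun ⟨h1, h2⟩ => ⟨h1, lt_of_lt_of_le hy.1 h1, h2⟩⟩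
    have e3 : (∫ x in Icc y 1, g x * w y) = (∫ x in y..(1:ℝ), g x) * w y := by
      rw [integral_Icc_eq_integral_Ioc, ← intervalIntegral.integral_of_le hy.2,
        intervalIntegral.integral_mul_const]
    have e4 : (∫ x in y..(1:ℝ), g x) = -(∫ t in (0:ℝ)..y, g t) := by
      have s1 : Set.uIcc (0:ℝ) y ⊆ Set.uIcc (0:ℝ) 1 := by
        rw [Set.uIcc_of_le hy.1.le, Set.uIcc_of_le zero_le_one]
        exact Set.Icc_subset_Icc le_rfl hy.2
      have s2 : Set.uIcc y (1:ℝ) ⊆ Set.uIcc (0:ℝ) 1 := by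
        rw [Set.uIcc_of_le hy.2, Set.uIcc_of_le zero_le_one]
        exact Set.Icc_subset_Icc hy.1.le le_rfl
      have := intervalIntegral.integral_add_adjacent_intervals
        (hgI.mono_set s1) (hgI.mono_set s2)
      rw [hg1] at this
      linarith
    rw [e2, e3, e4]; ring
  have lhs : (∫ x, ∫ y, F (x, y) ∂ν ∂ν) = ∫ x in (0:ℝ)..1, g x * (∫ y in (0:ℝ)..x, w y) := by
    rw [intervalIntegral.integral_of_le zero_le_one]
    exact MeasureTheory.setIntegral_congr_fun measurableSet_Ioc L
  have rhs : (∫ y, ∫ x, F (x, y) ∂ν ∂ν)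
      = - ∫ x in (0:ℝ)..1, (∫ t in (0:ℝ)..x, g t) * w x := by
    rw [intervalIntegral.integral_of_le zero_le_one, ← MeasureTheory.integral_neg]
    exact MeasureTheory.setIntegral_congr_fun measurableSet_Ioc R
  rw [← lhs, swap, rhs]

/-- A B-solution solves the homogeneous equation `Lu = 0` in the weak sense:
`E(u,h) = 0` for all `h ∈ H1`. -/
theorem bsolution_weak_solution (B u u' : ℝ → ℝ)
    (hB : ContinuousOn B (Set.Icc 0 1)) (hB0 : B 0 = 0)
    (hu : IsBSolution B u u') :
    ∀ h g : ℝ → ℝ, MemH1 h g → Eform B u u' h g = 0 := by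
  intro h g ⟨hg, hg1, hhg⟩
  obtain ⟨hud, hu'c, hueq⟩ := hu
  have hIcc : Set.uIcc (0:ℝ) 1 = Set.Icc 0 1 := Set.uIcc_of_le zero_le_one
  have huc : ContinuousOn u (Set.Icc 0 1) := fun x hx => (hud x hx).continuousWithinAt
  set w : ℝ → ℝ := fun y => u' y * B y with hwdef
  have hwc : ContinuousOn w (Set.Icc 0 1) := hu'c.mul hB
  have hwInt : MeasureTheory.IntegrableOn w (Set.Icc 0 1) :=
    hwc.integrableOn_compact isCompact_Icc
  set F : ℝ → ℝ := fun x => ∫ y in (0:ℝ)..x, w y with hFdef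
  set ht : ℝ → ℝ := fun x => ∫ t in (0:ℝ)..x, g t with htdef
  have hFc : ContinuousOn F (Set.uIcc 0 1) :=
    intervalIntegral.continuousOn_primitive_interval (hIcc ▸ hwInt)
  have htc : ContinuousOn ht (Set.uIcc 0 1) :=
    intervalIntegral.continuousOn_primitive_interval (hIcc ▸ hg)
  have hgI : IntervalIntegrable g volume 0 1 := (hIcc ▸ hg).intervalIntegrable
  -- integrability of the pieces
  have i1 : IntervalIntegrable (fun x => u' 0 * g x) volume 0 1 := hgI.const_mul _
  have i2 : IntervalIntegrable (fun x => u x * B x * g x) volume 0 1 :=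
    hgI.continuousOn_mul (hIcc ▸ huc.mul hB)
  have i3 : IntervalIntegrable (fun x => F x * g x) volume 0 1 := hgI.continuousOn_mul hFc
  have i4 : IntervalIntegrable (fun x => u' x * ht x * B x) volume 0 1 :=
    (((hIcc ▸ hu'c : ContinuousOn u' (Set.uIcc 0 1)).mul htc).mul
      (hIcc ▸ hB)).intervalIntegrable
  have i5 : IntervalIntegrable (fun x => u x * g x * B x) volume 0 1 := by
    have : (fun x => u x * g x * B x) = fun x => u x * B x * g x := by funext x; ring
    rw [this]; exact i2
  -- step 1 : rewrite the first integral using the B-solution identity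
  have step1 : (∫ x in (0:ℝ)..1, u' x * g x)
      = ∫ x in (0:ℝ)..1, (u' 0 * g x + u x * B x * g x - F x * g x) := by
    apply intervalIntegral.integral_congr
    intro x hx
    rw [hIcc] at hx
    show u' x * g x = u' 0 * g x + u x * B x * g x - F x * g x
    rw [hueq x hx]
    simp only [hFdef, hwdef]
    ring
  have step2 : (∫ x in (0:ℝ)..1, (u' 0 * g x + u x * B x * g x - F x * g x))
      = (∫ x in (0:ℝ)..1, u' 0 * g x) + (∫ x in (0:ℝ)..1, u x * B x * g x)
        - ∫ x in (0:ℝ)..1, F x * g x := by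
    rw [intervalIntegral.integral_sub (i1.add i2) i3, intervalIntegral.integral_add i1 i2]
  have step3 : (∫ x in (0:ℝ)..1, u' 0 * g x) = 0 := by
    rw [intervalIntegral.integral_const_mul, hg1, mul_zero]
  -- the integration by parts via Fubini
  have key : (∫ x in (0:ℝ)..1, F x * g x) = - ∫ x in (0:ℝ)..1, ht x * w x := by
    have := fubini_parts g w hg hwInt hg1
    change (∫ x in (0:ℝ)..1, g x * F x) = -∫ x in (0:ℝ)..1, ht x * w x at this
    rw [← this]
    apply intervalIntegral.integral_congr
    intro x _; ring
  -- rewrite the second integral of Eform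
  have second : (∫ x in (0:ℝ)..1, (u' x * h x + u x * g x) * B x)
      = (∫ x in (0:ℝ)..1, u' x * ht x * B x) + ∫ x in (0:ℝ)..1, u x * g x * B x := by
    rw [← intervalIntegral.integral_add i4 i5]
    apply intervalIntegral.integral_congr
    intro x hx
    rw [hIcc] at hx
    show (u' x * h x + u x * g x) * B x = u' x * ht x * B x + u x * g x * B x
    rw [hhg x hx]
    simp only [htdef]
    ring
  have e1 : (∫ x in (0:ℝ)..1, u' x * ht x * B x) = ∫ x in (0:ℝ)..1, ht x * w x := by
    apply intervalIntegral.integral_congr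
    intro x _; simp only [hwdef]; ring
  have e2 : (∫ x in (0:ℝ)..1, u x * g x * B x) = ∫ x in (0:ℝ)..1, u x * B x * g x := by
    apply intervalIntegral.integral_congr
    intro x _; ring
  unfold Eform
  rw [step1, step2, step3, key, second, e1, e2]
  ring
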